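/- Suppose the empirical distributions Pₙ of the deterministic parameters (αᵢ) converge pointwise to a continuous distribution function P, and Br : ℝ × ℝ → [a,b] is Lipschitz in z with constant L_z < 1 and Lipschitz in α with constant L. Let z*ᵢ,ₙ denote the equilibrium mean variable of agent i in the n-player game and z*_AEM the unique solution of z = ∫ Br(z,α) dP(α). Then lim_{n→∞} sup_{1≤i≤n} |z*ᵢ,ₙ − z*_AEM| = 0. -/

import Mathlib

open MeasureTheory Finset Filter

set_option maxHeartbeats 1000000

lemma grid_cover (t : ℕ → ℝ) : ∀ (k : ℕ) (x : ℝ), t 0 < x → x ≤ t k →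
    ∃ m, m < k ∧ t m < x ∧ x ≤ t (m + 1) := by
  intro k
  induction k with
  | zero => intro x h1 h2; exact absurd (h1.trans_le h2) (lt_irrefl _)
  | succ k ih =>
    intro x h1 h2
    by_cases h : x ≤ t k
    · obtain ⟨m, hm, hh⟩ := ih x h1 h
      exact ⟨m, Nat.lt_succ_of_lt hm, hh⟩
    · exact ⟨k, Nat.lt_succ_self k, not_le.1 h, h2⟩

lemma tendsto_of_eventual_bound {S : ℕ → ℝ} {I K : ℝ} (hK : 0 < K)
    (h : ∀ ε > (0:ℝ), ∀ᶠ n in atTop, |S n - I| ≤ K * ε) :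
    Tendsto S atTop (nhds I) := by
  rw [Metric.tendsto_atTop]
  intro ε hε
  obtain ⟨N, hN⟩ := eventually_atTop.1 (h (ε / (2 * K)) (by positivity))
  refine ⟨N, fun n hn => ?_⟩
  have h1 := hN n hn
  have h2 : K * (ε / (2 * K)) = ε / 2 := by field_simp
  rw [Real.dist_eq]
  calc |S n - I| ≤ K * (ε / (2 * K)) := h1
    _ = ε / 2 := h2
    _ < ε := by linarith

lemma empirical_tendsto (f : ℝ → ℝ) (C : ℝ) (hC : 0 ≤ C) (hfb : ∀ x, |f x| ≤ C)
    (L : ℝ) (hL0 : 0 ≤ L) (hLip : ∀ x y, |f x - f y| ≤ L * |x - y|)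
    (hfm : Measurable f)
    (μ : Measure ℝ) [IsProbabilityMeasure μ]
    (α : ℕ → ℝ)
    (hconv : ∀ t : ℝ, Tendsto
      (fun n : ℕ => (1 / (n : ℝ)) * (((Finset.range n).filter (fun i => α i ≤ t)).card : ℝ))
      atTop (nhds ((μ (Set.Iic t)).toReal))) :
    Tendsto (fun n : ℕ => (1 / (n : ℝ)) * ∑ j ∈ range n, f (α j)) atTop
      (nhds (∫ x, f x ∂μ)) := by
  set F : ℝ → ℝ := fun s => (μ (Set.Iic s)).toReal with hF
  set I : ℝ := ∫ x, f x ∂μ with hI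
  set Fn : ℕ → ℝ → ℝ := fun n s =>
    (1 / (n : ℝ)) * (((Finset.range n).filter (fun i => α i ≤ s)).card : ℝ) with hFn
  have hFmono : Monotone F := by
    intro s s' hss
    exact ENNReal.toReal_mono (measure_ne_top μ _) (measure_mono (Set.Iic_subset_Iic.2 hss))
  have hfint : Integrable f μ := by
    refine ⟨hfm.aestronglyMeasurable, ?_⟩
    exact HasFiniteIntegral.of_bounded (C := C) (ae_of_all _ fun x => by
      simpa [Real.norm_eq_abs] using hfb x)
  -- main estimate
  apply tendsto_of_eventual_bound (K := 3 + 6 * C) (by positivity)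
  intro ε hε
  -- choose tails
  have htop : Tendsto F atTop (nhds 1) := by
    have h1 := tendsto_measure_Iic_atTop (μ := μ)
    have h2 : (μ Set.univ) = 1 := measure_univ
    have := (ENNReal.tendsto_toReal (by simp [h2])).comp h1
    simpa [h2, hF, Function.comp_def] using this
  have hbot : Tendsto F atBot (nhds 0) := by
    have hempty : ⋂ x : ℝ, Set.Iic x = (∅ : Set ℝ) := by
      ext y; simp only [Set.mem_iInter, Set.mem_Iic, Set.mem_empty_iff_false, iff_false, not_forall]
      obtain ⟨z, hz⟩ := exists_lt y
      exact ⟨z, not_le.2 hz⟩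
    have h1 : Tendsto (fun x : ℝ => μ (Set.Iic x)) atBot (nhds 0) := by
      have := tendsto_measure_iInter_atBot (μ := μ) (s := fun x : ℝ => Set.Iic x)
        (fun x => measurableSet_Iic.nullMeasurableSet) (fun x y hxy => Set.Iic_subset_Iic.2 hxy)
        ⟨0, measure_ne_top μ _⟩
      rw [hempty] at this
      simpa [Function.comp_def] using this
    have := (ENNReal.tendsto_toReal (by simp)).comp h1
    simpa [hF, Function.comp_def] using this
  obtain ⟨T₁, hT₁⟩ := (htop.eventually (eventually_gt_nhds (by linarith : 1 - ε < 1))).exists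
  obtain ⟨T₂, hT₂⟩ := (hbot.eventually (eventually_lt_nhds hε)).exists
  set T : ℝ := max 1 (max T₁ (-T₂)) with hTdef
  have hT : 0 < T := lt_of_lt_of_le one_pos (le_max_left _ _)
  have hFT : 1 - ε < F T := lt_of_lt_of_le hT₁ (hFmono ((le_max_left T₁ (-T₂)).trans (le_max_right _ _)))
  have hFnT : F (-T) < ε := by
    refine lt_of_le_of_lt (hFmono ?_) hT₂
    have : -T₂ ≤ T := (le_max_right T₁ (-T₂)).trans (le_max_right _ _)
    linarith
  -- choose grid
  obtain ⟨k₀, hk₀⟩ := exists_nat_gt (L * (2 * T) / ε)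
  set k : ℕ := k₀ + 1 with hkdef
  have hkpos : 0 < (k : ℝ) := by positivity
  have hkgt : L * (2 * T) / ε < k := by
    refine lt_of_lt_of_le hk₀ ?_
    exact_mod_cast Nat.le_succ k₀
  set δ : ℝ := 2 * T / k with hδdef
  have hδ : 0 < δ := by positivity
  have hLδ : L * δ ≤ ε := by
    rw [div_lt_iff₀ hε] at hkgt
    have hδe : δ * k = 2 * T := by rw [hδdef]; exact div_mul_cancel₀ _ hkpos.ne'
    nlinarith
  set t : ℕ → ℝ := fun m => -T + m * δ with htdef
  have ht0 : t 0 = -T := by simp [htdef]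
  have htk : t k = T := by
    have : (k : ℝ) ≠ 0 := ne_of_gt hkpos
    have h2 : (k:ℝ) * (2*T/k) = 2*T := by field_simp
    simp only [htdef, hδdef]; linarith
  have htmono : ∀ {m m' : ℕ}, m ≤ m' → t m ≤ t m' := by
    intro m m' h
    simp only [htdef]
    have : (m : ℝ) ≤ m' := by exact_mod_cast h
    nlinarith
  have htstep : ∀ m : ℕ, t (m + 1) - t m = δ := by
    intro m; simp [htdef]; ring
  set g : ℝ → ℝ := fun x =>
    ∑ m ∈ range k, Set.indicator (Set.Ioc (t m) (t (m + 1))) (fun _ => f (t (m + 1))) x with hg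
  -- pointwise bound
  have hfg : ∀ x, |f x - g x| ≤ ε + C *
      (Set.indicator (Set.Iic (t 0)) (fun _ => (1:ℝ)) x
        + Set.indicator (Set.Ioi (t k)) (fun _ => (1:ℝ)) x) := by
    intro x
    by_cases hx0 : x ≤ t 0
    · have hgx : g x = 0 := by
        refine Finset.sum_eq_zero fun m _ => ?_
        refine Set.indicator_of_notMem ?_ _
        intro hmem
        exact absurd (lt_of_le_of_lt (hx0.trans (htmono (Nat.zero_le m))) hmem.1) (lt_irrefl _)
      have hi1 : Set.indicator (Set.Iic (t 0)) (fun _ => (1:ℝ)) x = 1 :=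
        Set.indicator_of_mem (Set.mem_Iic.2 hx0) _
      have hi2 : (0:ℝ) ≤ Set.indicator (Set.Ioi (t k)) (fun _ => (1:ℝ)) x :=
        Set.indicator_nonneg (fun _ _ => zero_le_one) x
      rw [hgx, sub_zero, hi1]
      nlinarith [hfb x]
    · by_cases hxk : t k < x
      · have hgx : g x = 0 := by
          refine Finset.sum_eq_zero fun m hm => ?_
          refine Set.indicator_of_notMem ?_ _
          intro hmem
          have : x ≤ t k := hmem.2.trans (htmono (Finset.mem_range.1 hm))
          exact absurd (lt_of_lt_of_le hxk this) (lt_irrefl _)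
        have hi2 : Set.indicator (Set.Ioi (t k)) (fun _ => (1:ℝ)) x = 1 :=
          Set.indicator_of_mem (Set.mem_Ioi.2 hxk) _
        have hi1 : (0:ℝ) ≤ Set.indicator (Set.Iic (t 0)) (fun _ => (1:ℝ)) x :=
          Set.indicator_nonneg (fun _ _ => zero_le_one) x
        rw [hgx, sub_zero, hi2]
        nlinarith [hfb x]
      · push_neg at hx0 hxk
        obtain ⟨m, hmk, hm1, hm2⟩ := grid_cover t k x hx0 hxk
        have hgx : g x = f (t (m + 1)) := by
          simp only [hg]
          rw [Finset.sum_eq_single_of_mem m (Finset.mem_range.2 hmk)]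
          · exact Set.indicator_of_mem (Set.mem_Ioc.2 ⟨hm1, hm2⟩) _
          · intro b _ hbm
            refine Set.indicator_of_notMem ?_ _
            intro hmem
            rcases lt_or_gt_of_ne hbm with hlt | hgt
            · have : x ≤ t m := hmem.2.trans (htmono (Nat.succ_le_of_lt hlt))
              exact absurd (lt_of_lt_of_le hm1 this) (lt_irrefl _)
            · have : t (m + 1) < x := lt_of_le_of_lt (htmono (Nat.succ_le_of_lt hgt)) hmem.1
              exact absurd (lt_of_lt_of_le this hm2) (lt_irrefl _)
        have hdist : |x - t (m + 1)| ≤ δ := by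
          have hstep := htstep m
          rw [abs_le]
          constructor
          · linarith
          · linarith
        have hind : (0:ℝ) ≤ Set.indicator (Set.Iic (t 0)) (fun _ => (1:ℝ)) x
            + Set.indicator (Set.Ioi (t k)) (fun _ => (1:ℝ)) x := by
          have := Set.indicator_nonneg (fun _ _ => (zero_le_one : (0:ℝ) ≤ 1))
            (s := Set.Iic (t 0)) x
          have := Set.indicator_nonneg (fun _ _ => (zero_le_one : (0:ℝ) ≤ 1))
            (s := Set.Ioi (t k)) x
          positivity
        rw [hgx]
        calc |f x - f (t (m+1))| ≤ L * |x - t (m+1)| := hLip _ _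
          _ ≤ L * δ := by nlinarith
          _ ≤ ε := hLδ
          _ ≤ _ := by nlinarith
    -- integrability facts
  have hgint : Integrable g μ := by
    refine integrable_finset_sum _ fun m _ => ?_
    exact (integrable_const _).indicator measurableSet_Ioc
  have hind1int : Integrable (Set.indicator (Set.Iic (t 0)) (fun _ => (1:ℝ))) μ :=
    (integrable_const _).indicator measurableSet_Iic
  have hind2int : Integrable (Set.indicator (Set.Ioi (t k)) (fun _ => (1:ℝ))) μ :=
    (integrable_const _).indicator measurableSet_Ioi
  have hIoc : ∀ s s' : ℝ, s ≤ s' → (μ (Set.Ioc s s')).toReal = F s' - F s := by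
    intro s s' h
    have h1 : Set.Ioc s s' = Set.Iic s' \ Set.Iic s := by ext x; simp [and_comm]
    rw [h1, measure_diff (Set.Iic_subset_Iic.2 h) measurableSet_Iic.nullMeasurableSet
      (measure_ne_top μ _)]
    exact ENNReal.toReal_sub_of_le (measure_mono (Set.Iic_subset_Iic.2 h)) (measure_ne_top μ _)
  have hIoi : (μ (Set.Ioi (t k))).toReal = 1 - F (t k) := by
    rw [← Set.compl_Iic, measure_compl measurableSet_Iic (measure_ne_top μ _), measure_univ]
    rw [ENNReal.toReal_sub_of_le prob_le_one ENNReal.one_ne_top]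
    simp [hF]
  have hIg : ∫ x, g x ∂μ = ∑ m ∈ range k, f (t (m+1)) * (F (t (m+1)) - F (t m)) := by
    simp only [hg]
    rw [integral_finset_sum _ (fun m _ => (integrable_const _).indicator measurableSet_Ioc)]
    refine Finset.sum_congr rfl fun m _ => ?_
    rw [integral_indicator_const _ measurableSet_Ioc, measureReal_def, hIoc _ _ (htmono (Nat.le_succ m)),
      smul_eq_mul, mul_comm]
  set Ig : ℝ := ∫ x, g x ∂μ with hIgdef
  -- integral bound
  have hIbound : |I - Ig| ≤ ε + C * (F (t 0) + (1 - F (t k))) := by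
    have h1 : I - Ig = ∫ x, (f x - g x) ∂μ := (integral_sub hfint hgint).symm
    have hbint : Integrable (fun x => ε + C * (Set.indicator (Set.Iic (t 0)) (fun _ => (1:ℝ)) x
        + Set.indicator (Set.Ioi (t k)) (fun _ => (1:ℝ)) x)) μ :=
      (integrable_const ε).add ((hind1int.add hind2int).const_mul C)
    have h2 : |∫ x, (f x - g x) ∂μ| ≤ ∫ x, |f x - g x| ∂μ := by
      simpa [Real.norm_eq_abs] using
        norm_integral_le_integral_norm (μ := μ) (fun x => f x - g x)
    have h3 : ∫ x, |f x - g x| ∂μ ≤ ∫ x, (ε + C *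
        (Set.indicator (Set.Iic (t 0)) (fun _ => (1:ℝ)) x
          + Set.indicator (Set.Ioi (t k)) (fun _ => (1:ℝ)) x)) ∂μ :=
      integral_mono (hfint.sub hgint).abs hbint hfg
    have h4 : ∫ x, (ε + C * (Set.indicator (Set.Iic (t 0)) (fun _ => (1:ℝ)) x
        + Set.indicator (Set.Ioi (t k)) (fun _ => (1:ℝ)) x)) ∂μ
        = ε + C * (F (t 0) + (1 - F (t k))) := by
      have hadd : Integrable (fun x => Set.indicator (Set.Iic (t 0)) (fun _ => (1:ℝ)) x
          + Set.indicator (Set.Ioi (t k)) (fun _ => (1:ℝ)) x) μ := hind1int.add hind2int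
      have hmul : Integrable (fun x => C * (Set.indicator (Set.Iic (t 0)) (fun _ => (1:ℝ)) x
          + Set.indicator (Set.Ioi (t k)) (fun _ => (1:ℝ)) x)) μ := hadd.const_mul C
      rw [integral_add (integrable_const ε) hmul]
      rw [integral_const_mul C _, integral_add hind1int hind2int]
      rw [integral_indicator_const _ measurableSet_Iic,
        integral_indicator_const _ measurableSet_Ioi]
      simp [measureReal_def, hIoi, hF]
    rw [h1]
    exact h2.trans (h3.trans_eq h4)
  -- empirical step identity
  have hGid : ∀ n : ℕ, (1/(n:ℝ)) * ∑ j ∈ range n, g (α j)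
      = ∑ m ∈ range k, f (t (m+1)) * (Fn n (t (m+1)) - Fn n (t m)) := by
    intro n
    have h1 : ∀ j ∈ range n, g (α j) = ∑ m ∈ range k,
        (if α j ∈ Set.Ioc (t m) (t (m+1)) then f (t (m+1)) else 0) := by
      intro j _
      simp [hg, Set.indicator_apply]
    rw [Finset.sum_congr rfl h1, Finset.sum_comm, Finset.mul_sum]
    refine Finset.sum_congr rfl fun m _ => ?_
    have hsub : (range n).filter (fun j => α j ≤ t m)
        ⊆ (range n).filter (fun j => α j ≤ t (m+1)) :=
      Finset.monotone_filter_right _ fun j _ hj => hj.trans (htmono (Nat.le_succ m))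
    have hcard : (range n).filter (fun j => α j ∈ Set.Ioc (t m) (t (m+1)))
        = ((range n).filter (fun j => α j ≤ t (m+1))) \ ((range n).filter (fun j => α j ≤ t m)) := by
      ext j
      simp only [Finset.mem_filter, Finset.mem_sdiff, Set.mem_Ioc, not_and, not_le]
      tauto
    have h2 : ∑ j ∈ range n, (if α j ∈ Set.Ioc (t m) (t (m+1)) then f (t (m+1)) else 0)
        = f (t (m+1)) * (((range n).filter (fun j => α j ∈ Set.Ioc (t m) (t (m+1)))).card : ℝ) := by
      calc ∑ j ∈ range n, (if α j ∈ Set.Ioc (t m) (t (m+1)) then f (t (m+1)) else 0)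
          = ∑ j ∈ range n, f (t (m+1)) * (if α j ∈ Set.Ioc (t m) (t (m+1)) then (1:ℝ) else 0) := by
            simp only [mul_ite, mul_one, mul_zero]
        _ = f (t (m+1)) * ∑ j ∈ range n, (if α j ∈ Set.Ioc (t m) (t (m+1)) then (1:ℝ) else 0) := by
            rw [Finset.mul_sum]
        _ = _ := by rw [Finset.sum_boole]
    rw [h2, hcard, Finset.card_sdiff_of_subset hsub, Nat.cast_sub (Finset.card_le_card hsub)]
    simp only [hFn]
    ring
    -- empirical bound
  have hSG : ∀ n : ℕ, 1 ≤ n → |(1/(n:ℝ)) * ∑ j ∈ range n, f (α j)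
      - (1/(n:ℝ)) * ∑ j ∈ range n, g (α j)|
      ≤ ε + C * (Fn n (t 0) + (1 - Fn n (t k))) := by
    intro n hn
    have hnpos : (0:ℝ) < n := by exact_mod_cast hn
    have hdiff : (1/(n:ℝ)) * ∑ j ∈ range n, f (α j) - (1/(n:ℝ)) * ∑ j ∈ range n, g (α j)
        = (1/(n:ℝ)) * ∑ j ∈ range n, (f (α j) - g (α j)) := by
      rw [← mul_sub, ← Finset.sum_sub_distrib]
    have habs : |(1/(n:ℝ)) * ∑ j ∈ range n, (f (α j) - g (α j))|
        ≤ (1/(n:ℝ)) * ∑ j ∈ range n, |f (α j) - g (α j)| := by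
      rw [abs_mul, abs_of_pos (by positivity : (0:ℝ) < 1/(n:ℝ))]
      exact mul_le_mul_of_nonneg_left (Finset.abs_sum_le_sum_abs _ _) (by positivity)
    have hsum : ∑ j ∈ range n, |f (α j) - g (α j)|
        ≤ ∑ j ∈ range n, (ε + C * (Set.indicator (Set.Iic (t 0)) (fun _ => (1:ℝ)) (α j)
          + Set.indicator (Set.Ioi (t k)) (fun _ => (1:ℝ)) (α j))) :=
      Finset.sum_le_sum fun j _ => hfg (α j)
    have hs1 : ∑ j ∈ range n, Set.indicator (Set.Iic (t 0)) (fun _ => (1:ℝ)) (α j)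
        = (((range n).filter (fun j => α j ≤ t 0)).card : ℝ) := by
      rw [← Finset.sum_boole]
      refine Finset.sum_congr rfl fun j _ => ?_
      simp [Set.indicator_apply, Set.mem_Iic]
    have hs2 : ∑ j ∈ range n, Set.indicator (Set.Ioi (t k)) (fun _ => (1:ℝ)) (α j)
        = (n : ℝ) - (((range n).filter (fun j => α j ≤ t k)).card : ℝ) := by
      have e1 : ∑ j ∈ range n, Set.indicator (Set.Ioi (t k)) (fun _ => (1:ℝ)) (α j)
          = (((range n).filter (fun j => ¬ α j ≤ t k)).card : ℝ) := by
        rw [← Finset.sum_boole]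
        refine Finset.sum_congr rfl fun j _ => ?_
        simp [Set.indicator_apply, Set.mem_Ioi, not_le]
      have e2 : ((range n).filter (fun j => α j ≤ t k)).card
          + ((range n).filter (fun j => ¬ α j ≤ t k)).card = n := by
        simpa using Finset.card_filter_add_card_filter_not
          (s := range n) (p := fun j => α j ≤ t k)
      rw [e1]
      have := congrArg (fun x : ℕ => (x : ℝ)) e2
      push_cast at this
      linarith
    have hsum2 : ∑ j ∈ range n, (ε + C * (Set.indicator (Set.Iic (t 0)) (fun _ => (1:ℝ)) (α j)
          + Set.indicator (Set.Ioi (t k)) (fun _ => (1:ℝ)) (α j)))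
        = (n : ℝ) * ε + C * ((((range n).filter (fun j => α j ≤ t 0)).card : ℝ)
          + ((n : ℝ) - (((range n).filter (fun j => α j ≤ t k)).card : ℝ))) := by
      rw [Finset.sum_add_distrib, Finset.sum_const, Finset.card_range, ← Finset.mul_sum,
        Finset.sum_add_distrib, hs1, hs2]
      ring
    have hfinal : (1/(n:ℝ)) * ((n : ℝ) * ε + C * ((((range n).filter (fun j => α j ≤ t 0)).card : ℝ)
          + ((n : ℝ) - (((range n).filter (fun j => α j ≤ t k)).card : ℝ))))
        = ε + C * (Fn n (t 0) + (1 - Fn n (t k))) := by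
      simp only [hFn]
      field_simp
    rw [hdiff]
    refine habs.trans ?_
    rw [← hfinal]
    refine mul_le_mul_of_nonneg_left ?_ (by positivity)
    rw [hsum2] at hsum
    linarith [hsum.trans_eq rfl]
  -- convergence of the step sums
  have hGtend : Tendsto (fun n : ℕ => (1/(n:ℝ)) * ∑ j ∈ range n, g (α j)) atTop (nhds Ig) := by
    rw [hIg]
    simp only [hGid]
    refine tendsto_finset_sum _ fun m _ => ?_
    exact (Tendsto.sub (hconv (t (m+1))) (hconv (t m))).const_mul _
  have hev1 : ∀ᶠ n : ℕ in atTop, |(1/(n:ℝ)) * ∑ j ∈ range n, g (α j) - Ig| ≤ ε := by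
    have h := Metric.tendsto_atTop.1 hGtend ε hε
    obtain ⟨N, hN⟩ := h
    rw [eventually_atTop]
    exact ⟨N, fun n hn => le_of_lt (by simpa [Real.dist_eq] using hN n hn)⟩
  have hev2 : ∀ᶠ n in atTop, Fn n (t 0) < 2 * ε := by
    have h0 : F (t 0) < 2 * ε := by rw [ht0]; linarith
    exact (hconv (t 0)).eventually_lt_const h0
  have hev3 : ∀ᶠ n in atTop, 1 - 2 * ε < Fn n (t k) := by
    have h0 : 1 - 2 * ε < F (t k) := by rw [htk]; linarith
    exact (hconv (t k)).eventually_const_lt h0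
  have hev4 : ∀ᶠ n in atTop, 1 ≤ n := eventually_ge_atTop 1
  filter_upwards [hev1, hev2, hev3, hev4] with n h1 h2 h3 h4
  have hb1 := hSG n h4
  have htri : |(1/(n:ℝ)) * ∑ j ∈ range n, f (α j) - I|
      ≤ |(1/(n:ℝ)) * ∑ j ∈ range n, f (α j) - (1/(n:ℝ)) * ∑ j ∈ range n, g (α j)|
        + |(1/(n:ℝ)) * ∑ j ∈ range n, g (α j) - Ig| + |Ig - I| := by
    have := abs_sub_le ((1/(n:ℝ)) * ∑ j ∈ range n, f (α j)) (1/(n:ℝ) * ∑ j ∈ range n, g (α j)) I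
    have h5 := abs_sub_le ((1/(n:ℝ)) * ∑ j ∈ range n, g (α j)) Ig I
    linarith
  have hIb : |Ig - I| ≤ ε + C * (F (t 0) + (1 - F (t k))) := by
    rw [abs_sub_comm]; exact hIbound
  have hF0 : F (t 0) ≤ ε := by rw [ht0]; linarith
  have hFk : 1 - F (t k) ≤ ε := by rw [htk]; linarith
  have hm1 : C * (Fn n (t 0) + (1 - Fn n (t k))) ≤ C * (2*ε + 2*ε) :=
    mul_le_mul_of_nonneg_left (by linarith) hC
  have hm2 : C * (F (t 0) + (1 - F (t k))) ≤ C * (ε + ε) :=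
    mul_le_mul_of_nonneg_left (by linarith) hC
  calc |(1/(n:ℝ)) * ∑ j ∈ range n, f (α j) - I|
      ≤ (ε + C * (Fn n (t 0) + (1 - Fn n (t k)))) + ε + (ε + C * (F (t 0) + (1 - F (t k)))) := by
        linarith
    _ ≤ (3 + 6 * C) * ε := by linarith

/-- Uniform convergence of the equilibrium mean variables to the asymptotic
equilibrium mean: `lim_n sup_i |z*ᵢ,ₙ − z*_AEM| = 0`. -/
theorem equilibrium_means_tendsto_AEM
    (a b Lz L : ℝ) (Br : ℝ → ℝ → ℝ)
    (hrange : ∀ z α, Br z α ∈ Set.Icc a b)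
    (hLz0 : 0 ≤ Lz) (hLz1 : Lz < 1) (hL0 : 0 ≤ L)
    (hLipz : ∀ z z' α, |Br z α - Br z' α| ≤ Lz * |z - z'|)
    (hLipα : ∀ z α α', |Br z α - Br z α'| ≤ L * |α - α'|)
    (μ : Measure ℝ) [IsProbabilityMeasure μ]
    (hmeas : ∀ z, Measurable (fun α => Br z α))
    (hPcont : Continuous (fun t => (μ (Set.Iic t)).toReal))
    (α : ℕ → ℝ)
    (hconv : ∀ t : ℝ, Tendsto
      (fun n : ℕ => (1 / (n : ℝ)) * (((Finset.range n).filter (fun i => α i ≤ t)).card : ℝ))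
      atTop (nhds ((μ (Set.Iic t)).toReal)))
    (zstar : (n : ℕ) → Fin n → ℝ)
    (hzstar : ∀ n, 2 ≤ n → ∀ i : Fin n, zstar n i =
      (1 / ((n : ℝ) - 1)) * ∑ j ∈ univ.erase i, Br (zstar n j) (α j))
    (zAEM : ℝ) (hzAEM : zAEM = ∫ x, Br zAEM x ∂μ) :
    Tendsto (fun n : ℕ => ⨆ i : Fin n, |zstar n i - zAEM|) atTop (nhds 0) := by
  set C : ℝ := max |a| |b| with hCdef
  have hC : 0 ≤ C := le_trans (abs_nonneg a) (le_max_left _ _)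
  have hab : ∀ z x, |Br z x| ≤ C := by
    intro z x
    obtain ⟨h1, h2⟩ := hrange z x
    rw [abs_le]
    constructor
    · have ha1 : |a| ≤ C := le_max_left _ _
      have ha2 := neg_abs_le a
      linarith
    · have hb1 : |b| ≤ C := le_max_right _ _
      have hb2 := le_abs_self b
      linarith
  set I : ℝ := ∫ x, Br zAEM x ∂μ with hIdef
  have hzI : zAEM = I := hzAEM
  set S : ℕ → ℝ := fun n => (1 / (n : ℝ)) * ∑ j ∈ range n, Br zAEM (α j) with hSdef
  have hS : Tendsto S atTop (nhds I) := by
    exact empirical_tendsto (fun x => Br zAEM x) C hC (fun x => hab zAEM x) L hL0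
      (fun x y => hLipα zAEM x y) (hmeas zAEM) μ α hconv
  have hfint : Integrable (fun x => Br zAEM x) μ := by
    refine ⟨(hmeas zAEM).aestronglyMeasurable, ?_⟩
    exact HasFiniteIntegral.of_bounded (C := C) (ae_of_all _ fun x => by
      simpa [Real.norm_eq_abs] using hab zAEM x)
  have hIC : |I| ≤ C := by
    have h1 : |I| ≤ ∫ x, |Br zAEM x| ∂μ := by
      simpa [Real.norm_eq_abs] using norm_integral_le_integral_norm (μ := μ) (fun x => Br zAEM x)
    have h2 : ∫ x, |Br zAEM x| ∂μ ≤ ∫ _x, C ∂μ :=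
      integral_mono hfint.abs (integrable_const C) (fun x => hab zAEM x)
    have h3 : ∫ _x : ℝ, C ∂μ = C := by simp
    linarith
  set E : ℕ → ℝ := fun n => 2 * |S n - I| + 2 * C / ((n : ℝ) - 1) with hEdef
  have key : ∀ n : ℕ, 2 ≤ n → (⨆ i : Fin n, |zstar n i - zAEM|) ≤ E n / (1 - Lz) := by
    intro n hn
    haveI : Nonempty (Fin n) := ⟨⟨0, by omega⟩⟩
    have hn2 : (2:ℝ) ≤ (n:ℝ) := by exact_mod_cast hn
    have hnm : (0:ℝ) < (n:ℝ) - 1 := by linarith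
    set M : ℝ := ⨆ i : Fin n, |zstar n i - zAEM| with hMdef
    have hbdd : BddAbove (Set.range fun i : Fin n => |zstar n i - zAEM|) :=
      (Set.finite_range _).bddAbove
    have hle : ∀ i : Fin n, |zstar n i - zAEM| ≤ Lz * M + E n := by
      intro i
      have hrec := hzstar n hn i
      have hsplit : ∑ j ∈ univ.erase i, Br (zstar n j) (α j)
          = ∑ j ∈ univ.erase i, (Br (zstar n j) (α j) - Br zAEM (α j))
            + ∑ j ∈ univ.erase i, Br zAEM (α j) := by
        rw [← Finset.sum_add_distrib]
        exact Finset.sum_congr rfl fun j _ => by ring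
      have hcard : ((univ.erase i).card : ℝ) = (n : ℝ) - 1 := by
        rw [Finset.card_erase_of_mem (Finset.mem_univ i), Finset.card_univ, Fintype.card_fin]
        rw [Nat.cast_sub (by omega)]
        simp
      have hA : |∑ j ∈ univ.erase i, (Br (zstar n j) (α j) - Br zAEM (α j))|
          ≤ ((n:ℝ) - 1) * (Lz * M) := by
        calc |∑ j ∈ univ.erase i, (Br (zstar n j) (α j) - Br zAEM (α j))|
            ≤ ∑ j ∈ univ.erase i, |Br (zstar n j) (α j) - Br zAEM (α j)| :=
              Finset.abs_sum_le_sum_abs _ _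
          _ ≤ ∑ _j ∈ univ.erase i, Lz * M := by
              refine Finset.sum_le_sum fun j _ => ?_
              have h1 := hLipz (zstar n j) zAEM (α j)
              have h2 : |zstar n j - zAEM| ≤ M := le_ciSup hbdd j
              calc |Br (zstar n j) (α j) - Br zAEM (α j)| ≤ Lz * |zstar n j - zAEM| := h1
                _ ≤ Lz * M := mul_le_mul_of_nonneg_left h2 hLz0
          _ = ((n:ℝ) - 1) * (Lz * M) := by
              rw [Finset.sum_const, nsmul_eq_mul, hcard]
      have hB : ∑ j ∈ univ.erase i, Br zAEM (α j) = (n : ℝ) * S n - Br zAEM (α i) := by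
        have h1 : ∑ j ∈ univ.erase i, Br zAEM (α j) + Br zAEM (α i)
            = ∑ j : Fin n, Br zAEM (α j) :=
          Finset.sum_erase_add _ _ (Finset.mem_univ i)
        have h2 : ∑ j : Fin n, Br zAEM (α (j:ℕ)) = ∑ j ∈ range n, Br zAEM (α j) :=
          Fin.sum_univ_eq_sum_range (fun j => Br zAEM (α j)) n
        have hne : (n:ℝ) ≠ 0 := by linarith
        have h3 : (n:ℝ) * S n = ∑ j ∈ range n, Br zAEM (α j) := by
          simp only [hSdef]
          field_simp
        linarith
      have hval : zstar n i - zAEM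
          = (1/((n:ℝ)-1)) * (∑ j ∈ univ.erase i, (Br (zstar n j) (α j) - Br zAEM (α j)))
            + ((1/((n:ℝ)-1)) * ((n:ℝ) * S n - Br zAEM (α i)) - zAEM) := by
        rw [hrec, hsplit, hB]
        ring
      have hBb : |(1/((n:ℝ)-1)) * ((n:ℝ) * S n - Br zAEM (α i)) - zAEM| ≤ E n := by
        have e1 : (1/((n:ℝ)-1)) * ((n:ℝ) * S n - Br zAEM (α i)) - zAEM
            = ((n:ℝ)/((n:ℝ)-1)) * (S n - I) + (I - Br zAEM (α i))/((n:ℝ)-1) := by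
          rw [hzI]
          field_simp
          ring
        have e3 : |I - Br zAEM (α i)| ≤ 2 * C := by
          have h4 := hab zAEM (α i)
          calc |I - Br zAEM (α i)| ≤ |I| + |Br zAEM (α i)| := abs_sub _ _
            _ ≤ 2 * C := by linarith
        have e4 : (n:ℝ)/((n:ℝ)-1) ≤ 2 := by
          rw [div_le_iff₀ hnm]
          linarith
        calc |(1/((n:ℝ)-1)) * ((n:ℝ) * S n - Br zAEM (α i)) - zAEM|
            = |((n:ℝ)/((n:ℝ)-1)) * (S n - I) + (I - Br zAEM (α i))/((n:ℝ)-1)| := by rw [e1]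
          _ ≤ |((n:ℝ)/((n:ℝ)-1)) * (S n - I)| + |(I - Br zAEM (α i))/((n:ℝ)-1)| := abs_add_le _ _
          _ = ((n:ℝ)/((n:ℝ)-1)) * |S n - I| + |I - Br zAEM (α i)|/((n:ℝ)-1) := by
              rw [abs_mul, abs_div, abs_div, abs_of_pos hnm,
                abs_of_nonneg (by positivity : (0:ℝ) ≤ (n:ℝ))]
          _ ≤ 2 * |S n - I| + 2 * C / ((n:ℝ)-1) := by
              have t1 : ((n:ℝ)/((n:ℝ)-1)) * |S n - I| ≤ 2 * |S n - I| :=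
                mul_le_mul_of_nonneg_right e4 (abs_nonneg _)
              have t2 : |I - Br zAEM (α i)|/((n:ℝ)-1) ≤ 2 * C / ((n:ℝ)-1) :=
                (div_le_div_iff_of_pos_right hnm).2 e3
              linarith
          _ = E n := rfl
      have hAb : |(1/((n:ℝ)-1)) * (∑ j ∈ univ.erase i, (Br (zstar n j) (α j) - Br zAEM (α j)))|
          ≤ Lz * M := by
        rw [abs_mul, abs_of_pos (by positivity : (0:ℝ) < 1/((n:ℝ)-1))]
        have := mul_le_mul_of_nonneg_left hA (by positivity : (0:ℝ) ≤ 1/((n:ℝ)-1))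
        calc (1/((n:ℝ)-1)) * |∑ j ∈ univ.erase i, (Br (zstar n j) (α j) - Br zAEM (α j))|
            ≤ (1/((n:ℝ)-1)) * (((n:ℝ) - 1) * (Lz * M)) := this
          _ = Lz * M := by field_simp
      calc |zstar n i - zAEM|
          ≤ |(1/((n:ℝ)-1)) * (∑ j ∈ univ.erase i, (Br (zstar n j) (α j) - Br zAEM (α j)))|
            + |(1/((n:ℝ)-1)) * ((n:ℝ) * S n - Br zAEM (α i)) - zAEM| := by
            rw [hval]; exact abs_add_le _ _
        _ ≤ Lz * M + E n := add_le_add hAb hBb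
    have hM1 : M ≤ Lz * M + E n := ciSup_le hle
    rw [le_div_iff₀ (by linarith : (0:ℝ) < 1 - Lz)]
    nlinarith
  have hE0 : Tendsto E atTop (nhds 0) := by
    have h1 : Tendsto (fun n : ℕ => |S n - I|) atTop (nhds 0) := by
      have h := hS.sub (tendsto_const_nhds (x := I))
      rw [sub_self] at h
      simpa using h.abs
    have h2 : Tendsto (fun n : ℕ => 2 * C / ((n : ℝ) - 1)) atTop (nhds 0) := by
      apply Tendsto.div_atTop (tendsto_const_nhds)
      have := tendsto_atTop_add_const_right atTop (-1 : ℝ) tendsto_natCast_atTop_atTop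
      simpa [sub_eq_add_neg] using this
    have := (h1.const_mul 2).add h2
    simpa [hEdef] using this
  have hEdiv : Tendsto (fun n => E n / (1 - Lz)) atTop (nhds 0) := by
    have := hE0.div_const (1 - Lz)
    simpa using this
  refine squeeze_zero' ?_ ?_ hEdiv
  · exact Eventually.of_forall fun n => Real.iSup_nonneg fun i => abs_nonneg _
  · exact eventually_atTop.2 ⟨2, key⟩
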